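/- Let G be a divisible ordered abelian group whose value set Γ (under the natural valuation) is a dense linear order without endpoints, and whose archimedean components are all equal to ℝ. Then for every proper cut (B, C) of a finite-dimensional divisible subgroup G′ ⊆ G with the property that the cut is 'group transcendental' over G′ (i.e., after translating by the element d₀ of G′ closest in valuation, the sets Δ₁ = {v(c − d₀) : c ∈ C} and Δ₂ = {v(b − d₀) : b ∈ B, b > d₀} satisfy Δ₁ < Δ₂ and define a cut in Γ not filled in v(G′)), there exists y ∈ G realizing the cut: B < y + d₀ < C. -/

import Mathlib

/-- Archimedean equivalence: `x ∼ y` iff `∃ n ∈ ℕ, n|x| ≥ |y|` and `n|y| ≥ |x|`. -/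
def archEquiv {G : Type*} [AddCommGroup G] [LinearOrder G] [IsOrderedAddMonoid G] (x y : G) : Prop :=
  ∃ n : ℕ, |y| ≤ n • |x| ∧ |x| ≤ n • |y|

/-- `vlt x y` expresses `v x < v y` for the natural valuation `v` into the value set
`Γ` (reversed order: `v x < v y` iff `∀ n, n|y| < |x|`). -/
def vlt {G : Type*} [AddCommGroup G] [LinearOrder G] [IsOrderedAddMonoid G] (x y : G) : Prop :=
  ∀ n : ℕ, n • |y| < |x|

/-- The real number `y/x := sup {r ∈ ℚ : r • x < y}` for `y` in the archimedean
class of a positive `x`. -/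
noncomputable def ratio {G : Type*} [AddCommGroup G] [LinearOrder G] [IsOrderedAddMonoid G] [Module ℚ G]
    (y x : G) : ℝ :=
  sSup {r : ℝ | ∃ q : ℚ, r = (q : ℝ) ∧ q • x < y}

set_option linter.unusedSectionVars false

section Helpers
variable {G : Type*} [AddCommGroup G] [LinearOrder G] [IsOrderedAddMonoid G] [Module ℚ G]

lemma den_smul_qsmul (q : ℚ) (x : G) : (q.den : ℕ) • (q • x) = q.num • x := by
  rw [← Nat.cast_smul_eq_nsmul ℚ, ← Int.cast_smul_eq_zsmul ℚ, smul_smul]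
  norm_num [mul_comm (q.den : ℚ) q, Rat.mul_den_eq_num]

lemma qsmul_nonneg' {q : ℚ} (hq : 0 ≤ q) {x : G} (hx : 0 ≤ x) : 0 ≤ q • x := by
  by_contra h
  push_neg at h
  have h1 : 0 < (q.den : ℕ) • (-(q • x)) := nsmul_pos (neg_pos.2 h) q.den_nz
  rw [smul_neg, den_smul_qsmul, neg_pos] at h1
  exact absurd (zsmul_nonneg hx (Rat.num_nonneg.2 hq)) (not_le.2 h1)

instance (priority := low) : PosSMulMono ℚ G :=
  ⟨fun {q} hq a b hab => by
    have := qsmul_nonneg' hq (sub_nonneg.2 hab)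
    rwa [smul_sub, sub_nonneg] at this⟩

lemma vlt_trans {x y z : G} (h1 : vlt x y) (h2 : vlt y z) : vlt x z := by
  intro n
  calc n • |z| < |y| := h2 n
  _ ≤ 1 • |y| := by simp
  _ < |x| := h1 1

lemma span_bound (t : Set G) (x : G) (hb : ∀ y ∈ t, ∃ N : ℕ, |y| ≤ N • |x|) :
    ∀ y ∈ Submodule.span ℚ t, ∃ N : ℕ, |y| ≤ N • |x| := by
  have hx : 0 ≤ |x| := abs_nonneg x
  intro y hy
  induction hy using Submodule.span_induction with
  | mem z hz => exact hb z hz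
  | zero => exact ⟨0, by simp⟩
  | add a b _ _ ha hb' =>
    obtain ⟨N₁, h₁⟩ := ha
    obtain ⟨N₂, h₂⟩ := hb'
    exact ⟨N₁ + N₂, (abs_add_le a b).trans (by rw [add_nsmul]; exact add_le_add h₁ h₂)⟩
  | smul q a _ ha =>
    obtain ⟨N, hN⟩ := ha
    refine ⟨⌈|q|⌉₊ * N, ?_⟩
    rw [abs_smul]
    calc |q| • |a| ≤ |q| • (N • |x|) := smul_le_smul_of_nonneg_left hN (abs_nonneg q)
    _ = (|q| * N) • |x| := by rw [← Nat.cast_smul_eq_nsmul ℚ N |x|, smul_smul]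
    _ ≤ ((⌈|q|⌉₊ * N : ℕ) : ℚ) • |x| := by
        refine smul_le_smul_of_nonneg_right ?_ hx
        push_cast
        exact mul_le_mul_of_nonneg_right (Nat.le_ceil _) (by positivity)
    _ = (⌈|q|⌉₊ * N) • |x| := Nat.cast_smul_eq_nsmul ℚ _ _

lemma chain_linearIndependent : ∀ (n : ℕ) (x : Fin n → G), (∀ i, x i ≠ 0) →
    (∀ i j : Fin n, i < j → vlt (x i) (x j)) → LinearIndependent ℚ x := by
  intro n
  induction n with
  | zero => intro x _ _; exact linearIndependent_empty_type
  | succ n ih =>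
    intro x hx0 hc
    rw [linearIndependent_fin_succ]
    refine ⟨ih (Fin.tail x) (fun i => hx0 i.succ)
        (fun i j hij => hc i.succ j.succ (by simpa using hij)), ?_⟩
    intro hmem
    cases n with
    | zero =>
      simp [Fin.tail] at hmem
      exact hx0 0 hmem
    | succ m =>
      have h01 : (0 : Fin (m + 2)) < 1 := by rw [Fin.lt_def]; simp
      have hb : ∀ y ∈ Set.range (Fin.tail x), ∃ N : ℕ, |y| ≤ N • |x 1| := by
        rintro y ⟨i, rfl⟩
        refine ⟨1, ?_⟩
        show |x i.succ| ≤ 1 • |x 1|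
        rcases eq_or_lt_of_le (show (1 : Fin (m + 2)) ≤ i.succ by
          rw [Fin.le_def]; simpa using Nat.one_le_iff_ne_zero.2 (by simp)) with h | h
        · rw [← h]; simp
        · simpa using le_of_lt (hc 1 i.succ h 1)
      obtain ⟨N, hN⟩ := span_bound _ _ hb _ hmem
      exact absurd hN (not_le.2 (hc 0 1 h01 N))

lemma no_chain (G' : Submodule ℚ G) [FiniteDimensional ℚ G'] (f : ℕ → G)
    (hf : ∀ k, f k ∈ G') (hf0 : ∀ k, f k ≠ 0)
    (hchain : ∀ i j : ℕ, i < j → vlt (f i) (f j)) : False := by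
  set d := Module.finrank ℚ G' with hd
  have hli : LinearIndependent ℚ (fun i : Fin (d + 1) => (⟨f i, hf i⟩ : G')) := by
    apply LinearIndependent.of_comp G'.subtype
    have : (G'.subtype ∘ fun i : Fin (d + 1) => (⟨f i, hf i⟩ : G')) =
        fun i : Fin (d + 1) => f i := rfl
    rw [this]
    exact chain_linearIndependent (d + 1) _ (fun i => hf0 i)
      (fun i j hij => hchain i j (by exact_mod_cast hij))
  have := hli.fintype_card_le_finrank
  simp [← hd] at this

lemma succ_chain_mono {f : ℕ → G} (h : ∀ k, vlt (f k) (f (k + 1))) :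
    ∀ i j : ℕ, i < j → vlt (f i) (f j) := by
  intro i j hij
  induction j with
  | zero => omega
  | succ m ihm =>
    rcases Nat.lt_or_ge i m with h' | h'
    · exact vlt_trans (ihm h') (h m)
    · have : i = m := by omega
      subst this
      exact h i

lemma exists_vlt_max (G' : Submodule ℚ G) [FiniteDimensional ℚ G'] (S : Set G)
    (hS : S ⊆ (G' : Set G)) (h0 : (0 : G) ∉ S) (hne : S.Nonempty) :
    ∃ s ∈ S, ∀ t ∈ S, ¬ vlt s t := by
  by_contra h
  push_neg at h
  have h' : ∀ t : S, ∃ t' : S, vlt (t : G) (t' : G) := by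
    rintro ⟨t, ht⟩
    obtain ⟨t', ht', hv⟩ := h t ht
    exact ⟨⟨t', ht'⟩, hv⟩
  choose g hg using h'
  obtain ⟨s₀, hs₀⟩ := hne
  let f : ℕ → S := fun k => g^[k] ⟨s₀, hs₀⟩
  have hstep : ∀ k, vlt ((f k : G)) ((f (k + 1) : G)) := by
    intro k
    have : f (k + 1) = g (f k) := Function.iterate_succ_apply' g k _
    rw [this]
    exact hg (f k)
  exact no_chain G' (fun k => (f k : G)) (fun k => hS (f k).2)
    (fun k => fun he => h0 (he ▸ (f k).2)) (succ_chain_mono hstep)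

lemma exists_vlt_min (G' : Submodule ℚ G) [FiniteDimensional ℚ G'] (S : Set G)
    (hS : S ⊆ (G' : Set G)) (h0 : (0 : G) ∉ S) (hne : S.Nonempty) :
    ∃ s ∈ S, ∀ t ∈ S, ¬ vlt t s := by
  by_contra h
  push_neg at h
  have h' : ∀ t : S, ∃ t' : S, vlt ((t' : G)) ((t : G)) := by
    rintro ⟨t, ht⟩
    obtain ⟨t', ht', hv⟩ := h t ht
    exact ⟨⟨t', ht'⟩, hv⟩
  choose g hg using h'
  obtain ⟨s₀, hs₀⟩ := hne
  let f : ℕ → S := fun k => g^[k] ⟨s₀, hs₀⟩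
  have hstep : ∀ k, vlt ((f (k + 1) : G)) ((f k : G)) := by
    intro k
    have : f (k + 1) = g (f k) := Function.iterate_succ_apply' g k _
    rw [this]
    exact hg (f k)
  have hmono : ∀ i j : ℕ, i < j → vlt ((f j : G)) ((f i : G)) := by
    intro i j hij
    induction j with
    | zero => omega
    | succ m ihm =>
      rcases Nat.lt_or_ge i m with h'' | h''
      · exact vlt_trans (hstep m) (ihm h'')
      · have : i = m := by omega
        subst this
        exact hstep i
  set d := Module.finrank ℚ G' with hd
  have hli : LinearIndependent ℚ
      (fun i : Fin (d + 1) => (⟨(f (d - (i : ℕ)) : G), hS (f _).2⟩ : G')) := by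
    apply LinearIndependent.of_comp G'.subtype
    have heq : (G'.subtype ∘ fun i : Fin (d + 1) =>
        (⟨(f (d - (i : ℕ)) : G), hS (f _).2⟩ : G')) =
        fun i : Fin (d + 1) => (f (d - (i : ℕ)) : G) := rfl
    rw [heq]
    refine chain_linearIndependent (d + 1) _
      (fun i => fun he => h0 (he ▸ (f _).2)) ?_
    intro i j hij
    have hij' : (i : ℕ) < (j : ℕ) := hij
    have hj : (j : ℕ) ≤ d := Nat.lt_succ_iff.mp j.isLt
    exact hmono (d - (j : ℕ)) (d - (i : ℕ)) (by omega)
  have := hli.fintype_card_le_finrank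
  simp [← hd] at this
end Helpers

/-- let `G` be a divisible ordered abelian group whose value set `Γ` is
a dense linear order without endpoints and whose archimedean components all equal
`ℝ`.  Let `(B, C)` be a proper cut of a finite-dimensional divisible subgroup
`G' ⊆ G` which is group transcendental over `G'`: for `d₀ ∈ B ⊆ G'`, the sets
`Δ₁ = {v (c - d₀) : c ∈ C}` and `Δ₂ = {v (b - d₀) : b ∈ B, b > d₀}` satisfy
`Δ₁ < Δ₂` and define a cut in `Γ` not filled in `v(G')`.  Then some `y ∈ G`
realizes the cut: `B < y + d₀ < C`. -/
theorem groupTranscendental_cut_realized (G : Type*)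
    [AddCommGroup G] [LinearOrder G] [IsOrderedAddMonoid G] [Module ℚ G]
    (hdense : ∀ x y : G, x ≠ 0 → y ≠ 0 → vlt x y →
      ∃ z : G, z ≠ 0 ∧ vlt x z ∧ vlt z y)
    (hbelow : ∀ x : G, x ≠ 0 → ∃ z : G, z ≠ 0 ∧ vlt z x)
    (habove : ∀ x : G, x ≠ 0 → ∃ z : G, z ≠ 0 ∧ vlt x z)
    (harch : ∀ x : G, 0 < x → ∀ r : ℝ, r ≠ 0 →
      ∃ y : G, archEquiv x y ∧ ratio y x = r)
    (G' : Submodule ℚ G) (hfd : FiniteDimensional ℚ G')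
    (B C : Set G) (hBsub : B ⊆ (G' : Set G)) (hCsub : C ⊆ (G' : Set G))
    (hBne : B.Nonempty) (hCne : C.Nonempty)
    (hcover : B ∪ C = (G' : Set G))
    (hBC : ∀ b ∈ B, ∀ c ∈ C, b < c)
    (d₀ : G) (hd₀ : d₀ ∈ B)
    (hsep : ∀ c ∈ C, ∀ b ∈ B, d₀ < b → vlt (c - d₀) (b - d₀))
    (hnotfilled : ¬ ∃ g ∈ G', g ≠ 0 ∧ (∀ c ∈ C, vlt (c - d₀) g) ∧
      (∀ b ∈ B, d₀ < b → vlt g (b - d₀))) :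
    ∃ y : G, (∀ b ∈ B, b < y + d₀) ∧ (∀ c ∈ C, y + d₀ < c) := by
  classical
  obtain ⟨c₀, hc₀⟩ := hCne
  -- the set Δ₁ : translated elements of C
  set S₁ : Set G := (fun c => c - d₀) '' C with hS₁def
  have hS₁sub : S₁ ⊆ (G' : Set G) := by
    rintro _ ⟨c, hc, rfl⟩
    exact G'.sub_mem (hCsub hc) (hBsub hd₀)
  have hS₁0 : (0 : G) ∉ S₁ := by
    rintro ⟨c, hc, hc0⟩
    rw [sub_eq_zero] at hc0
    exact absurd (hBC d₀ hd₀ c hc) (by simp [hc0])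
  obtain ⟨s, hsS, hsmax⟩ := exists_vlt_max G' S₁ hS₁sub hS₁0 ⟨c₀ - d₀, c₀, hc₀, rfl⟩
  obtain ⟨cs, hcs, rfl⟩ := hsS
  have hcs_ne : cs - d₀ ≠ 0 := sub_ne_zero.2 (ne_of_gt (hBC d₀ hd₀ cs hcs))
  have hCbound : ∀ c ∈ C, ∃ n : ℕ, |cs - d₀| ≤ n • |c - d₀| := by
    intro c hc
    have h := hsmax _ ⟨c, hc, rfl⟩
    unfold vlt at h
    push_neg at h
    exact h
  -- "y < c - d₀ for all c" from vlt (cs - d₀) z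
  have Cside : ∀ z : G, vlt (cs - d₀) z → ∀ c ∈ C, |z| + d₀ < c := by
    intro z hz c hc
    obtain ⟨n, hn⟩ := hCbound c hc
    have hcd : 0 < c - d₀ := sub_pos.2 (hBC d₀ hd₀ c hc)
    have h1 : (n + 1) • |z| < |cs - d₀| := hz (n + 1)
    have hn' : |cs - d₀| ≤ (n + 1) • (c - d₀) := by
      rw [← abs_of_pos hcd]
      exact hn.trans (nsmul_le_nsmul_left (abs_nonneg _) (Nat.le_succ n))
    have h2 : (n + 1) • |z| < (n + 1) • (c - d₀) := h1.trans_le hn'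
    have h3 : |z| < c - d₀ := by
      by_contra hco
      push_neg at hco
      exact absurd (nsmul_le_nsmul_right hco (n + 1)) (not_le.2 h2)
    exact lt_sub_iff_add_lt.mp h3
  by_cases hB2 : ∃ b ∈ B, d₀ < b
  · obtain ⟨b₁, hb₁, hb₁d⟩ := hB2
    set S₂ : Set G := (fun b => b - d₀) '' {b | b ∈ B ∧ d₀ < b} with hS₂def
    have hS₂sub : S₂ ⊆ (G' : Set G) := by
      rintro _ ⟨b, ⟨hb, _⟩, rfl⟩
      exact G'.sub_mem (hBsub hb) (hBsub hd₀)
    have hS₂0 : (0 : G) ∉ S₂ := by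
      rintro ⟨b, ⟨_, hbd⟩, hb0⟩
      rw [sub_eq_zero] at hb0
      exact absurd hbd (by rw [hb0]; exact lt_irrefl d₀)
    obtain ⟨t, htS, htmin⟩ := exists_vlt_min G' S₂ hS₂sub hS₂0
      ⟨b₁ - d₀, b₁, ⟨hb₁, hb₁d⟩, rfl⟩
    obtain ⟨bs, ⟨hbs, hbsd⟩, rfl⟩ := htS
    have hbs_ne : bs - d₀ ≠ 0 := sub_ne_zero.2 (ne_of_gt hbsd)
    have hBbound : ∀ b ∈ B, d₀ < b → ∃ n : ℕ, |b - d₀| ≤ n • |bs - d₀| := by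
      intro b hb hbd
      have h := htmin _ ⟨b, ⟨hb, hbd⟩, rfl⟩
      unfold vlt at h
      push_neg at h
      exact h
    obtain ⟨z, hz0, hz1, hz2⟩ := hdense _ _ hcs_ne hbs_ne (hsep cs hcs bs hbs hbsd)
    refine ⟨|z|, ?_, Cside z hz1⟩
    intro b hb
    rcases le_or_gt b d₀ with hbd | hbd
    · calc b ≤ d₀ := hbd
        _ < |z| + d₀ := lt_add_of_pos_left d₀ (abs_pos.2 hz0)
    · obtain ⟨n, hn⟩ := hBbound b hb hbd
      have h1 : n • |bs - d₀| < |z| := hz2 n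
      have h2 : b - d₀ ≤ |b - d₀| := le_abs_self _
      exact sub_lt_iff_lt_add.mp (lt_of_le_of_lt (h2.trans hn) h1)
  · push_neg at hB2
    obtain ⟨z, hz0, hz1⟩ := habove _ hcs_ne
    refine ⟨|z|, ?_, Cside z hz1⟩
    intro b hb
    calc b ≤ d₀ := hB2 b hb
    _ < |z| + d₀ := lt_add_of_pos_left d₀ (abs_pos.2 hz0)
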